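/- arXiv:2509.05186 — 3 statements merged into one kernel-verified Lean document; each statement's English description precedes it below -/
import Mathlib

section
/- Let Y be a measurable space, Z a standard Borel space, and κ : Y → Measure Z a probability kernel (a Markov kernel). Then there exists a jointly measurable function f : [0,1] × Y → Z such that for every y ∈ Y, the pushforward of the uniform measure on [0,1] under f(·, y) equals κ(y). -/
open MeasureTheory ProbabilityTheory Set Filter

section aux

variable {μ : Measure ℝ}

lemma aux_nonempty {u : ℝ} (hu1 : u < 1) : {x : ℝ | u ≤ cdf μ x}.Nonempty := by
  have h := (tendsto_cdf_atTop (μ := μ)).eventually (eventually_ge_nhds hu1)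
  exact h.exists

lemma aux_bddBelow {u : ℝ} (hu0 : 0 < u) : BddBelow {x : ℝ | u ≤ cdf μ x} := by
  have h := (tendsto_cdf_atBot (μ := μ)).eventually (eventually_lt_nhds hu0)
  obtain ⟨x₀, hx₀⟩ := h.exists
  refine ⟨x₀, fun x hx => ?_⟩
  by_contra hlt
  push_neg at hlt
  exact absurd (le_trans hx (monotone_cdf _ hlt.le)) (not_le.mpr hx₀)

lemma aux_key {u : ℝ} (hu0 : 0 < u) (hu1 : u < 1) (t : ℝ) :
    sInf {x : ℝ | u ≤ cdf μ x} ≤ t ↔ u ≤ cdf μ t := by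
  constructor
  · intro h
    have htendsto : Tendsto (cdf μ) (nhdsWithin t (Ioi t)) (nhds (cdf μ t)) :=
      ((cdf μ).right_continuous t).tendsto.mono_left
        (nhdsWithin_mono t Ioi_subset_Ici_self)
    refine ge_of_tendsto htendsto ?_
    filter_upwards [self_mem_nhdsWithin] with x hx
    obtain ⟨s, hs, hst⟩ := exists_lt_of_csInf_lt (aux_nonempty hu1) (lt_of_le_of_lt h hx)
    exact le_trans hs (monotone_cdf _ hst.le)
  · intro h
    exact csInf_le (aux_bddBelow hu0) h

end aux

/-- Kernel representation lemma: any Markov kernel `κ` from a measurable space `Y`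
to a standard Borel space `Z` admits a jointly measurable representation
`f : [0,1] × Y → Z` such that for every `y`, the pushforward of the uniform measure
on `[0,1]` under `f (·, y)` equals `κ y`. -/
theorem stmt_3 {Y Z : Type*} [MeasurableSpace Y] [MeasurableSpace Z]
    [StandardBorelSpace Z] [Nonempty Z]
    (κ : Kernel Y Z) [IsMarkovKernel κ] :
    ∃ f : ℝ × Y → Z, Measurable f ∧
      ∀ y : Y, Measure.map (fun u => f (u, y)) (volume.restrict (Set.Icc (0 : ℝ) 1))
        = κ y := by
  obtain ⟨e, he⟩ := exists_measurableEmbedding_real Z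
  set κ' : Kernel Y ℝ := κ.map e with hκ'
  have : IsMarkovKernel κ' := Kernel.IsMarkovKernel.map κ he.measurable
  -- clamp function
  set c : ℝ → ℝ := fun u => if u ∈ Ioo (0:ℝ) 1 then u else (1:ℝ)/2 with hc
  have hc_mem : ∀ u, c u ∈ Ioo (0:ℝ) 1 := by
    intro u
    simp only [hc]
    split_ifs with h
    · exact h
    · constructor <;> norm_num
  have hc_eq : ∀ u ∈ Ioo (0:ℝ) 1, c u = u := fun u hu => if_pos hu
  have hc_meas : Measurable c :=
    Measurable.ite measurableSet_Ioo measurable_id measurable_const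
  -- quantile function
  set g : ℝ × Y → ℝ := fun p => sInf {x : ℝ | c p.1 ≤ cdf (κ' p.2) x} with hg
  have hg_iff : ∀ p t, g p ≤ t ↔ c p.1 ≤ cdf (κ' p.2) t := fun p t =>
    aux_key (hc_mem p.1).1 (hc_mem p.1).2 t
  have hcdf_meas : ∀ t : ℝ, Measurable fun y => cdf (κ' y) t := by
    intro t
    have : (fun y => cdf (κ' y) t) = fun y => (κ' y (Iic t)).toReal := by
      funext y; exact cdf_eq_real _ _
    rw [this]
    exact (κ'.measurable_coe measurableSet_Iic).ennreal_toReal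
  have hg_meas : Measurable g := by
    refine measurable_of_Iic fun t => ?_
    have : g ⁻¹' Iic t = {p : ℝ × Y | c p.1 ≤ cdf (κ' p.2) t} := by
      ext p; exact hg_iff p t
    rw [this]
    exact measurableSet_le (hc_meas.comp measurable_fst)
      ((hcdf_meas t).comp measurable_snd)
  -- the pushforward of the uniform measure under the quantile is κ'
  have hrestrict : volume.restrict (Icc (0:ℝ) 1) = volume.restrict (Ioo (0:ℝ) 1) :=
    (Measure.restrict_congr_set Ioo_ae_eq_Icc).symm
  have hgy_meas : ∀ y, Measurable fun u => g (u, y) := fun y =>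
    hg_meas.comp (measurable_prodMk_right)
  have hmap : ∀ y, Measure.map (fun u => g (u, y)) (volume.restrict (Icc (0:ℝ) 1)) = κ' y := by
    intro y
    rw [hrestrict]
    have hprob : IsProbabilityMeasure
        (Measure.map (fun u => g (u, y)) (volume.restrict (Ioo (0:ℝ) 1))) := by
      have : IsProbabilityMeasure (volume.restrict (Ioo (0:ℝ) 1)) := by
        constructor; simp
      exact Measure.isProbabilityMeasure_map (hgy_meas y).aemeasurable
    refine Measure.ext_of_Iic _ _ fun t => ?_
    rw [Measure.map_apply (hgy_meas y) measurableSet_Iic,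
      Measure.restrict_apply ((hgy_meas y) measurableSet_Iic)]
    have hset : (fun u => g (u, y)) ⁻¹' Iic t ∩ Ioo 0 1
        = Ioo (0:ℝ) 1 ∩ Iic (cdf (κ' y) t) := by
      ext u
      simp only [mem_inter_iff, mem_preimage, mem_Iic, and_comm]
      refine and_congr_right fun hu => ?_
      rw [hg_iff (u, y) t, hc_eq u hu]
    rw [hset, ← ofReal_cdf (κ' y) t]
    have h0 : (0:ℝ) ≤ cdf (κ' y) t := cdf_nonneg _ _
    rcases lt_or_eq_of_le (cdf_le_one (κ' y) t) with h1 | h1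
    · have : Ioo (0:ℝ) 1 ∩ Iic (cdf (κ' y) t) = Ioc 0 (cdf (κ' y) t) := by
        ext x
        simp only [mem_inter_iff, mem_Ioo, mem_Iic, mem_Ioc]
        constructor
        · rintro ⟨⟨hx0, _⟩, hx⟩; exact ⟨hx0, hx⟩
        · rintro ⟨hx0, hx⟩; exact ⟨⟨hx0, lt_of_le_of_lt hx h1⟩, hx⟩
      rw [this, Real.volume_Ioc, sub_zero]
    · have : Ioo (0:ℝ) 1 ∩ Iic (cdf (κ' y) t) = Ioo 0 1 := by
        rw [inter_eq_left]
        intro x hx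
        rw [mem_Iic, h1]
        exact hx.2.le
      rw [this, Real.volume_Ioo, sub_zero, h1]
  -- compose with the left inverse of the embedding
  set h : ℝ → Z := Function.extend e id (fun _ => Classical.arbitrary Z) with hh
  have hh_meas : Measurable h := he.measurable_extend measurable_id measurable_const
  have hhe : h ∘ e = id := by
    funext z
    simp only [hh, Function.comp_apply, he.injective.extend_apply, id]
  refine ⟨fun p => h (g p), hh_meas.comp hg_meas, fun y => ?_⟩
  have : (fun u => h (g (u, y))) = h ∘ fun u => g (u, y) := rfl
  rw [this, ← Measure.map_map hh_meas (hgy_meas y), hmap y, hκ',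
    Kernel.map_apply κ he.measurable, Measure.map_map hh_meas he.measurable, hhe,
    Measure.map_id]
end

section
/- Let H be a Polish space, η a nonatomic Borel probability measure on H, Y a measurable space, Z a standard Borel space, and κ : Y → Measure Z a Markov kernel. Then there exists a measurable map G : H × Y → Z such that for every y ∈ Y, the pushforward of η under G(·, y) equals κ(y). -/
open MeasureTheory ProbabilityTheory Set Filter
open scoped Topology

lemma aux_measurable_invFun {Z : Type*} [MeasurableSpace Z] [Nonempty Z]
    {f : Z → ℝ} (hf : MeasurableEmbedding f) : Measurable (Function.invFun f) := by
  intro A hA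
  classical
  have himg : MeasurableSet (f '' A) := hf.measurableSet_image.2 hA
  have hrange : MeasurableSet (Set.range f) := hf.measurableSet_range
  by_cases hc : (Classical.choice ‹Nonempty Z›) ∈ A
  · have hset : Function.invFun f ⁻¹' A = f '' A ∪ (Set.range f)ᶜ := by
      ext x
      constructor
      · intro hx
        by_cases hxr : x ∈ Set.range f
        · obtain ⟨z, rfl⟩ := hxr
          exact Or.inl ⟨z, by rwa [Set.mem_preimage, Function.leftInverse_invFun hf.injective z] at hx, rfl⟩
        · exact Or.inr hxr
      · rintro (⟨z, hz, rfl⟩ | hxr)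
        · simpa [Set.mem_preimage, Function.leftInverse_invFun hf.injective z] using hz
        · have hne : ¬ ∃ a, f a = x := by simpa [Set.mem_range] using hxr
          simpa [Set.mem_preimage, Function.invFun_neg hne] using hc
    rw [hset]; exact himg.union hrange.compl
  · have hset : Function.invFun f ⁻¹' A = f '' A := by
      ext x
      constructor
      · intro hx
        by_cases hxr : x ∈ Set.range f
        · obtain ⟨z, rfl⟩ := hxr
          exact ⟨z, by rwa [Set.mem_preimage, Function.leftInverse_invFun hf.injective z] at hx, rfl⟩
        · exfalso
          have hne : ¬ ∃ a, f a = x := by simpa [Set.mem_range] using hxr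
          rw [Set.mem_preimage, Function.invFun_neg hne] at hx
          exact hc hx
      · rintro ⟨z, hz, rfl⟩
        simpa [Set.mem_preimage, Function.leftInverse_invFun hf.injective z] using hz
    rw [hset]; exact himg

lemma aux_quantile_le_iff {ρ : Measure ℝ} [IsProbabilityMeasure ρ] {u : ℝ}
    (h0 : 0 < u) (h1 : u < 1) (x : ℝ) :
    sInf {x' | u ≤ cdf ρ x'} ≤ x ↔ u ≤ cdf ρ x := by
  set S : Set ℝ := {x' | u ≤ cdf ρ x'} with hS
  have hne : S.Nonempty := by
    have := (tendsto_cdf_atTop ρ).eventually (eventually_gt_nhds h1)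
    obtain ⟨x', hx'⟩ := this.exists
    exact ⟨x', le_of_lt hx'⟩
  have hbdd : BddBelow S := by
    have := (tendsto_cdf_atBot ρ).eventually (eventually_lt_nhds h0)
    obtain ⟨x₀, hx₀⟩ := this.exists
    refine ⟨x₀, fun s hs => ?_⟩
    by_contra hlt
    push_neg at hlt
    exact absurd (le_trans hs (monotone_cdf ρ hlt.le)) (not_le.2 hx₀)
  have hmem : u ≤ cdf ρ (sInf S) := by
    have hrc : Filter.Tendsto (cdf ρ) (𝓝[>] (sInf S)) (𝓝 (cdf ρ (sInf S))) :=
      ((cdf ρ).right_continuous (sInf S)).mono_of_mem_nhdsWithin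
        (nhdsWithin_mono _ Ioi_subset_Ici_self self_mem_nhdsWithin)
    refine ge_of_tendsto hrc ?_
    filter_upwards [self_mem_nhdsWithin] with x' hx'
    obtain ⟨s, hsS, hs⟩ := exists_lt_of_csInf_lt hne hx'
    exact le_trans hsS (monotone_cdf ρ hs.le)
  constructor
  · intro h
    exact le_trans hmem (monotone_cdf ρ h)
  · intro h
    exact csInf_le hbdd h

lemma aux_cdf_uniform {μ : Measure ℝ} [IsProbabilityMeasure μ] [NullSingletonClass μ]
    {t : ℝ} (ht0 : 0 ≤ t) (ht1 : t ≤ 1) :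
    μ {v | cdf μ v ≤ t} = ENNReal.ofReal t := by
  rcases eq_or_lt_of_le ht1 with h1 | h1
  · subst h1
    have : {v | cdf μ v ≤ 1} = univ := eq_univ_of_forall fun v => cdf_le_one μ v
    rw [this, measure_univ, ENNReal.ofReal_one]
  set S : Set ℝ := {v | cdf μ v ≤ t} with hSdef
  have hlower : IsLowerSet S := fun a b hba ha => le_trans (monotone_cdf μ hba) ha
  -- S is bounded above
  obtain ⟨x₀, hx₀⟩ : ∃ x₀, t < cdf μ x₀ :=
    ((tendsto_cdf_atTop μ).eventually (eventually_gt_nhds h1)).exists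
  have hbdd : BddAbove S := by
    refine ⟨x₀, fun s hs => ?_⟩
    by_contra hlt
    push_neg at hlt
    exact absurd (le_trans (monotone_cdf μ hlt.le) hs) (not_le.2 hx₀)
  rcases S.eq_empty_or_nonempty with hS | hS
  · rw [hS, measure_empty]
    have ht : t ≤ 0 := by
      by_contra hpos
      push_neg at hpos
      obtain ⟨v, hv⟩ := ((tendsto_cdf_atBot μ).eventually (eventually_lt_nhds hpos)).exists
      exact (Set.eq_empty_iff_forall_notMem.1 hS v) hv.le
    rw [ENNReal.ofReal_eq_zero.2 (le_antisymm ht ht0 ▸ le_rfl)]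
  · set c := sSup S with hc
    have hIio : Iio c ⊆ S := fun v hv => by
      obtain ⟨s, hsS, hvs⟩ := exists_lt_of_lt_csSup hS hv
      exact hlower hvs.le hsS
    have hSIic : S ⊆ Iic c := fun v hv => le_csSup hbdd hv
    -- μ S = μ (Iic c)
    have hmeq : μ S = μ (Iic c) := by
      refine le_antisymm (measure_mono hSIic) ?_
      calc μ (Iic c) = μ (Iio c) := (measure_congr (Iio_ae_eq_Iic (a := c) (μ := μ))).symm
        _ ≤ μ S := measure_mono hIio
    -- cdf μ c = t
    have hcge : t ≤ cdf μ c := by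
      have hrc : Filter.Tendsto (cdf μ) (𝓝[>] c) (𝓝 (cdf μ c)) :=
        ((cdf μ).right_continuous c).mono_of_mem_nhdsWithin
          (nhdsWithin_mono _ Ioi_subset_Ici_self self_mem_nhdsWithin)
      refine ge_of_tendsto hrc ?_
      filter_upwards [self_mem_nhdsWithin] with x' hx'
      have hx'S : x' ∉ S := fun hmem => absurd (mem_Iic.1 (hSIic hmem)) (not_le.2 hx')
      exact (not_le.1 hx'S).le
    have hcle : cdf μ c ≤ t := by
      have hofReal : μ (Iio c) ≤ ENNReal.ofReal t := by
        have hun : Iio c = ⋃ n : ℕ, Iic (c - 1 / (n + 1)) := by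
          ext v
          simp only [mem_Iio, mem_iUnion, mem_Iic]
          constructor
          · intro hv
            obtain ⟨n, hn⟩ := exists_nat_one_div_lt (sub_pos.2 hv)
            exact ⟨n, by push_cast at hn ⊢; linarith⟩
          · rintro ⟨n, hn⟩
            have : (0:ℝ) < 1 / (n + 1) := by positivity
            linarith
        have hmono : Monotone fun n : ℕ => Iic (c - 1 / ((n:ℝ) + 1)) := by
          intro n m hnm
          refine Iic_subset_Iic.2 ?_
          have h1 : (0:ℝ) < (n:ℝ) + 1 := by positivity
          have h2 : ((n:ℝ) + 1) ≤ (m:ℝ) + 1 := by exact_mod_cast by omega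
          have : (1:ℝ) / ((m:ℝ) + 1) ≤ 1 / ((n:ℝ) + 1) := one_div_le_one_div_of_le h1 h2
          linarith
        rw [hun, hmono.directed_le.measure_iUnion]
        refine iSup_le fun n => ?_
        have hmemS : c - 1 / (n + 1) ∈ S := hIio (by
          have : (0:ℝ) < 1 / (n + 1) := by positivity
          simp only [mem_Iio]; linarith)
        rw [← ofReal_cdf μ]
        exact ENNReal.ofReal_le_ofReal hmemS
      have : ENNReal.ofReal (cdf μ c) ≤ ENNReal.ofReal t := by
        rw [ofReal_cdf μ c]
        calc μ (Iic c) = μ (Iio c) := (measure_congr (Iio_ae_eq_Iic (a := c) (μ := μ))).symm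
          _ ≤ ENNReal.ofReal t := hofReal
      exact (ENNReal.ofReal_le_ofReal_iff ht0).1 this
    have hct : cdf μ c = t := le_antisymm hcle hcge
    rw [hmeq, ← ofReal_cdf μ c, hct]

/-- Existence of a conditional generative model (Generative ICON): given a nonatomic
Borel probability measure `η` on a Polish space `H` and a Markov kernel `κ` from a
measurable space `Y` to a standard Borel space `Z`, there is a measurable map
`G : H × Y → Z` such that for every `y`, the pushforward of `η` under `G (·, y)`
equals `κ y`. -/
theorem stmt_4 {H Y Z : Type*} [TopologicalSpace H] [PolishSpace H]
    [MeasurableSpace H] [BorelSpace H]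
    [MeasurableSpace Y] [MeasurableSpace Z] [StandardBorelSpace Z] [Nonempty Z]
    (η : Measure H) [IsProbabilityMeasure η] [NullSingletonClass η]
    (κ : Kernel Y Z) [IsMarkovKernel κ] :
    ∃ G : H × Y → Z, Measurable G ∧
      ∀ y : Y, Measure.map (fun h => G (h, y)) η = κ y := by
  classical
  obtain ⟨eH, heH⟩ := MeasureTheory.exists_measurableEmbedding_real H
  obtain ⟨eZ, heZ⟩ := MeasureTheory.exists_measurableEmbedding_real Z
  set μ : Measure ℝ := η.map eH with hμdef
  haveI : IsProbabilityMeasure μ := Measure.isProbabilityMeasure_map heH.measurable.aemeasurable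
  haveI : NullSingletonClass μ := by
    constructor
    intro x
    rw [hμdef, Measure.map_apply heH.measurable (measurableSet_singleton x)]
    exact (Set.subsingleton_singleton.preimage heH.injective).measure_zero η
  have hprobZ : ∀ y, IsProbabilityMeasure ((κ y).map eZ) := fun y =>
    Measure.isProbabilityMeasure_map heZ.measurable.aemeasurable
  -- measurability of the cdf of the image kernel, in y
  have hFy_meas : ∀ x : ℝ, Measurable fun y => cdf ((κ y).map eZ) x := by
    intro x
    have heq : ∀ y, cdf ((κ y).map eZ) x = ((κ y) (eZ ⁻¹' Iic x)).toReal := by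
      intro y
      haveI := hprobZ y
      rw [cdf_eq_real, measureReal_def, Measure.map_apply heZ.measurable measurableSet_Iic]
    simp_rw [heq]
    exact (κ.measurable_coe (heZ.measurable measurableSet_Iic)).ennreal_toReal
  -- F: cdf of μ
  have hF_meas : Measurable fun v => cdf μ v := (monotone_cdf μ).measurable
  -- quantile map
  set q : ℝ × Y → ℝ := fun p =>
    if p.1 ∈ Ioo (0:ℝ) 1 then sInf {x | p.1 ≤ cdf ((κ p.2).map eZ) x} else 0 with hqdef
  have hq_meas : Measurable q := by
    apply measurable_of_Iic
    intro x
    have hset : q ⁻¹' Iic x =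
        ((Prod.fst ⁻¹' Ioo (0:ℝ) 1) ∩ {p : ℝ × Y | p.1 ≤ cdf ((κ p.2).map eZ) x}) ∪
        ((Prod.fst ⁻¹' Ioo (0:ℝ) 1)ᶜ ∩ {_p : ℝ × Y | (0:ℝ) ≤ x}) := by
      ext p
      by_cases hp : p.1 ∈ Ioo (0:ℝ) 1
      · haveI := hprobZ p.2
        simp only [mem_preimage, mem_Iic, hqdef, if_pos hp, mem_union, mem_inter_iff,
          mem_setOf_eq, mem_compl_iff, hp, not_true_eq_false, false_and, or_false, true_and]
        exact aux_quantile_le_iff hp.1 hp.2 x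
      · simp only [mem_preimage, mem_Iic, hqdef, if_neg hp, mem_union, mem_inter_iff,
          mem_setOf_eq, mem_compl_iff, hp, false_and, false_or, not_false_eq_true, true_and,
          if_false]
    rw [hset]
    refine MeasurableSet.union ?_ ?_
    · exact (measurable_fst measurableSet_Ioo).inter
        (measurableSet_le measurable_fst ((hFy_meas x).comp measurable_snd))
    · exact (measurable_fst measurableSet_Ioo).compl.inter (MeasurableSet.const _)
  -- inverse of the embedding of Z
  set g : ℝ → Z := Function.invFun eZ with hgdef
  have hg_meas : Measurable g := aux_measurable_invFun heZ
  refine ⟨fun p => g (q (cdf μ (eH p.1), p.2)), ?_, ?_⟩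
  · exact hg_meas.comp (hq_meas.comp
      ((hF_meas.comp (heH.measurable.comp measurable_fst)).prodMk measurable_snd))
  intro y
  haveI := hprobZ y
  have hqy_meas : Measurable fun u => q (u, y) :=
    hq_meas.comp (measurable_id.prodMk measurable_const)
  -- Step B : map of the quantile over the transformed measure
  have stepB : Measure.map ((fun u => q (u, y)) ∘ fun v => cdf μ v) μ = (κ y).map eZ := by
    have hcomp_meas : Measurable ((fun u => q (u, y)) ∘ fun v => cdf μ v) :=
      hqy_meas.comp hF_meas
    haveI : IsProbabilityMeasure (Measure.map ((fun u => q (u, y)) ∘ fun v => cdf μ v) μ) :=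
      Measure.isProbabilityMeasure_map hcomp_meas.aemeasurable
    refine Measure.ext_of_Iic _ _ fun x => ?_
    rw [Measure.map_apply hcomp_meas measurableSet_Iic]
    set t : ℝ := cdf ((κ y).map eZ) x with htdef
    have ht0 : 0 ≤ t := cdf_nonneg _ x
    have ht1 : t ≤ 1 := cdf_le_one _ x
    -- a.e., cdf μ v ∈ Ioo 0 1
    have h0 : μ {v | cdf μ v ≤ 0} = 0 := by
      rw [aux_cdf_uniform le_rfl zero_le_one, ENNReal.ofReal_zero]
    have h1 : μ {v | 1 ≤ cdf μ v} = 0 := by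
      have hle : ∀ n : ℕ, μ {v | 1 ≤ cdf μ v} ≤ ENNReal.ofReal (1 / (n + 1)) := by
        intro n
        have hpos : (0:ℝ) < 1 / ((n:ℝ) + 1) := by positivity
        have hle1 : (1:ℝ) / ((n:ℝ) + 1) ≤ 1 := by
          rw [div_le_one (by positivity)]; push_cast; linarith [Nat.cast_nonneg (α := ℝ) n]
        have hsub : {v | 1 ≤ cdf μ v} ⊆ {v | cdf μ v ≤ 1 - 1 / ((n:ℝ) + 1)}ᶜ := by
          intro v hv
          simp only [mem_compl_iff, mem_setOf_eq, not_le] at hv ⊢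
          linarith
        have hmeasS : MeasurableSet {v | cdf μ v ≤ 1 - 1 / ((n:ℝ) + 1)} :=
          measurableSet_le hF_meas measurable_const
        calc μ {v | 1 ≤ cdf μ v} ≤ μ ({v | cdf μ v ≤ 1 - 1 / ((n:ℝ) + 1)}ᶜ) :=
              measure_mono hsub
          _ = 1 - μ {v | cdf μ v ≤ 1 - 1 / ((n:ℝ) + 1)} := by
              rw [measure_compl hmeasS (measure_ne_top _ _), measure_univ]
          _ = 1 - ENNReal.ofReal (1 - 1 / ((n:ℝ) + 1)) := by
              rw [aux_cdf_uniform (by linarith) (by linarith)]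
          _ = ENNReal.ofReal (1 / ((n:ℝ) + 1)) := by
              rw [← ENNReal.ofReal_one, ← ENNReal.ofReal_sub _ (by linarith)]
              norm_num
      have htend : Tendsto (fun n : ℕ => ENNReal.ofReal (1 / ((n:ℝ) + 1))) atTop (𝓝 0) := by
        rw [← ENNReal.ofReal_zero]
        exact ENNReal.tendsto_ofReal tendsto_one_div_add_atTop_nhds_zero_nat
      exact le_antisymm (ge_of_tendsto' htend fun n => hle n) zero_le
    have hae : ∀ᵐ v ∂μ, cdf μ v ∈ Ioo (0:ℝ) 1 := by
      rw [ae_iff]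
      refine measure_mono_null ?_ (measure_union_null h0 h1)
      intro v hv
      simp only [mem_setOf_eq, mem_Ioo, not_and_or, not_lt] at hv
      simpa only [mem_union, mem_setOf_eq] using hv
    have haeeq : ((fun u => q (u, y)) ∘ fun v => cdf μ v) ⁻¹' Iic x
        =ᵐ[μ] {v | cdf μ v ≤ t} := by
      rw [Filter.eventuallyEq_set]
      filter_upwards [hae] with v hv
      simp only [mem_preimage, Function.comp_apply, mem_Iic, mem_setOf_eq, hqdef, if_pos hv]
      exact aux_quantile_le_iff hv.1 hv.2 x
    rw [measure_congr haeeq, aux_cdf_uniform ht0 ht1, htdef, ofReal_cdf]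
  -- putting everything together
  have hchain : Measure.map (fun h => g (q (cdf μ (eH h), y))) η
      = Measure.map g ((κ y).map eZ) := by
    have h1 : Measure.map (fun h => g (q (cdf μ (eH h), y))) η
        = Measure.map (g ∘ ((fun u => q (u, y)) ∘ fun v => cdf μ v)) μ := by
      rw [hμdef, Measure.map_map (hg_meas.comp (hqy_meas.comp hF_meas)) heH.measurable]
      rfl
    rw [h1, ← Measure.map_map hg_meas (hqy_meas.comp hF_meas), stepB]
  rw [hchain, Measure.map_map hg_meas heZ.measurable]
  have hginv : g ∘ eZ = id := funext fun z => Function.leftInverse_invFun heZ.injective z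
  rw [hginv, Measure.map_id]
end

section
/- Let (Ω, F, P) be a probability space, A, Y, Z standard Borel spaces, and random variables α : Ω → A, and pairs (yʲ, zʲ), j = 1,…,J, such that given α, the pairs (yʲ, zʲ) are i.i.d. with common conditional law P_{y,z|α}. Then the conditional distribution of z^J given (y^J, {(yʲ, zʲ)}_{j=1}^{J−1}) equals the mixture ∫_A P_{z|y,α}(· | y^J, α) Π(dα), where Π is the conditional (posterior) distribution of α given {(yʲ, zʲ)}_{j=1}^{J−1}, provided y^J is independent of α and of the first J−1 pairs. -/
open MeasureTheory ProbabilityTheory ENNReal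

/-- The in-context conditional distribution is the Bayesian posterior predictive:
if, given the parameter `α`, the `n+1` condition–solution pairs `(yʲ, zʲ)` are i.i.d.
with common law `ν_Y ⊗ lik(α, ·)` (so in particular the new condition `y^J` is
independent of `α` and of the first `n` pairs), then the conditional distribution of
the last solution `z^J` given the last condition `y^J` and the first `n` pairs is the
mixture of the likelihood `lik(·, y^J)` against the posterior distribution of `α`
given the first `n` pairs. -/
theorem stmt_13 {Ω A Y Z : Type*} [MeasurableSpace Ω]
    [MeasurableSpace A] [StandardBorelSpace A] [Nonempty A]
    [MeasurableSpace Y] [StandardBorelSpace Y] [Nonempty Y]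
    [MeasurableSpace Z] [StandardBorelSpace Z] [Nonempty Z]
    (μ : Measure Ω) [IsProbabilityMeasure μ]
    (n : ℕ)
    (α : Ω → A) (hα : Measurable α)
    (yz : Fin (n + 1) → Ω → Y × Z) (hyz : ∀ j, Measurable (yz j))
    (νY : Measure Y) [IsProbabilityMeasure νY]
    (lik : Kernel (A × Y) Z) [IsMarkovKernel lik]
    (κJ : Kernel A (Fin (n + 1) → Y × Z)) [IsMarkovKernel κJ]
    (hiid : ∀ a : A, κJ a = Measure.pi fun _ : Fin (n + 1) =>
        νY.compProd (lik.comap (fun y => (a, y))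
          (measurable_const.prodMk measurable_id)))
    (hjoint : Measure.map (fun ω => (α ω, fun j => yz j ω)) μ
        = (μ.map α).compProd κJ) :
    let prev : Ω → (Fin n → Y × Z) := fun ω j => yz j.castSucc ω
    let yq : Ω → Y := fun ω => (yz (Fin.last n) ω).1
    let zq : Ω → Z := fun ω => (yz (Fin.last n) ω).2
    let post : Kernel (Fin n → Y × Z) A := condDistrib α prev μ
    ∀ᵐ p ∂(μ.map fun ω => (yq ω, prev ω)),
      condDistrib zq (fun ω => (yq ω, prev ω)) μ p
        = (post p.2).bind (fun a => lik (a, p.1)) := by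
  intro prev yq zq post
  -- basic measurability
  have hprev : Measurable prev := measurable_pi_lambda _ fun j => hyz j.castSucc
  have hyq : Measurable yq := measurable_fst.comp (hyz (Fin.last n))
  have hzq : Measurable zq := measurable_snd.comp (hyz (Fin.last n))
  have hW : Measurable fun ω => (yq ω, prev ω) := hyq.prodMk hprev
  have hyzf : Measurable fun ω => (fun j => yz j ω) := measurable_pi_lambda _ hyz
  have hαyz : Measurable fun ω => (α ω, fun j => yz j ω) := hα.prodMk hyzf
  haveI : IsProbabilityMeasure (μ.map α) := Measure.isProbabilityMeasure_map hα.aemeasurable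
  -- restriction / splitting maps on the sample path space
  set restr : (Fin (n + 1) → Y × Z) → (Fin n → Y × Z) := fun f j => f j.castSucc with hrestrdef
  have hrestr : Measurable restr := measurable_pi_lambda _ fun j => measurable_pi_apply _
  set split : (Fin (n + 1) → Y × Z) → (Y × Z) × (Fin n → Y × Z) :=
    fun f => (f (Fin.last n), fun j => f j.castSucc) with hsplitdef
  have hsplit : Measurable split :=
    (measurable_pi_apply _).prodMk (measurable_pi_lambda _ fun j => measurable_pi_apply _)
  -- the one-sample law
  set m1 : A → Measure (Y × Z) := fun a =>
    νY.compProd (lik.comap (fun y => (a, y)) (measurable_const.prodMk measurable_id)) with hm1def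
  have hm1 : ∀ a, IsProbabilityMeasure (m1 a) := fun a => by
    rw [hm1def]; infer_instance
  -- splitting is measure preserving for the iid law
  have hsplitMP : ∀ a, MeasurePreserving split (κJ a)
      ((m1 a).prod (Measure.pi fun _ : Fin n => m1 a)) := by
    intro a
    have hMP := measurePreserving_piFinSuccAbove (fun _ : Fin (n + 1) => m1 a) (Fin.last n)
    have hcoe : ⇑(MeasurableEquiv.piFinSuccAbove (fun _ : Fin (n + 1) => Y × Z) (Fin.last n))
        = split := by
      funext f
      simp [MeasurableEquiv.piFinSuccAbove_apply, Fin.succAbove_last, hsplitdef]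
      rfl
    rw [hiid a]
    rw [hcoe] at hMP
    exact hMP
  -- the marginal kernel of the first n pairs
  set κn : Kernel A (Fin n → Y × Z) := κJ.map restr with hκndef
  haveI : IsMarkovKernel κn := Kernel.IsMarkovKernel.map κJ hrestr
  have hκn : ∀ a, κn a = Measure.pi fun _ : Fin n => m1 a := by
    intro a
    haveI := hm1 a
    rw [hκndef, Kernel.map_apply κJ hrestr]
    have h1 : restr = Prod.snd ∘ split := rfl
    rw [h1, ← Measure.map_map measurable_snd hsplit, (hsplitMP a).map_eq,
      Measure.map_snd_prod, measure_univ, one_smul]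
  -- reduction of double integrals against the posterior-free model to integrals over μ
  have hred : ∀ ψ : (Fin n → Y × Z) × A → ℝ≥0∞, Measurable ψ →
      (∫⁻ a, ∫⁻ d, ψ (d, a) ∂κn a ∂(μ.map α)) = ∫⁻ ω, ψ (prev ω, α ω) ∂μ := by
    intro ψ hψ
    have hcomp : Measurable fun q : A × (Fin (n + 1) → Y × Z) => ψ (restr q.2, q.1) :=
      hψ.comp ((hrestr.comp measurable_snd).prodMk measurable_fst)
    have h1 : ∀ a, ∫⁻ d, ψ (d, a) ∂κn a = ∫⁻ f, ψ (restr f, a) ∂κJ a := by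
      intro a
      have hm : Measurable fun d => ψ (d, a) :=
        hψ.comp (measurable_id.prodMk measurable_const)
      rw [hκndef, Kernel.map_apply κJ hrestr, lintegral_map hm hrestr]
    simp_rw [h1]
    rw [← Measure.lintegral_compProd hcomp, ← hjoint, lintegral_map hcomp hαyz]
  -- the posterior disintegration
  have hpostm : Measurable fun ω => (prev ω, α ω) := hprev.prodMk hα
  haveI : IsProbabilityMeasure (μ.map fun ω => (prev ω, α ω)) :=
    Measure.isProbabilityMeasure_map hpostm.aemeasurable
  have hpost : μ.map (fun ω => (prev ω, α ω)) = (μ.map prev) ⊗ₘ post := by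
    show _ = (μ.map prev) ⊗ₘ condDistrib α prev μ
    rw [compProd_map_condDistrib hα.aemeasurable]
  -- the candidate kernel: posterior predictive
  set κmix : Kernel (Y × (Fin n → Y × Z)) Z :=
    lik.comp ((post.comap Prod.snd measurable_snd) ×ₖ Kernel.deterministic Prod.fst
      measurable_fst) with hκmixdef
  haveI : IsMarkovKernel κmix := by rw [hκmixdef]; infer_instance
  have hκmixapply : ∀ p : Y × (Fin n → Y × Z),
      κmix p = (post p.2).bind fun a => lik (a, p.1) := by
    intro p
    rw [hκmixdef, Kernel.comp_apply, Kernel.prod_apply, Kernel.comap_apply,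
      Kernel.deterministic_apply, Measure.prod_dirac]
    ext s hs
    have hm : Measurable fun a : A => lik (a, p.1) :=
      (Kernel.measurable lik).comp measurable_prodMk_right
    rw [Measure.bind_apply hs (Kernel.measurable lik).aemeasurable, Measure.bind_apply hs hm.aemeasurable,
      lintegral_map (Kernel.measurable_coe lik hs) measurable_prodMk_right]
  -- main claim: the joint law disintegrates via κmix
  have key : μ.map (fun ω => ((yq ω, prev ω), zq ω))
      = (μ.map fun ω => (yq ω, prev ω)) ⊗ₘ κmix := by
    haveI : IsProbabilityMeasure (μ.map fun ω => (yq ω, prev ω)) :=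
      Measure.isProbabilityMeasure_map hW.aemeasurable
    haveI : IsProbabilityMeasure (μ.map fun ω => ((yq ω, prev ω), zq ω)) :=
      Measure.isProbabilityMeasure_map (hW.prodMk hzq).aemeasurable
    -- maps from the joint (α, paths) law
    set g : A × (Fin (n + 1) → Y × Z) → (Y × (Fin n → Y × Z)) × Z :=
      fun q => (((q.2 (Fin.last n)).1, restr q.2), (q.2 (Fin.last n)).2) with hgdef
    have hg : Measurable g :=
      ((((measurable_pi_apply _).comp measurable_snd).fst).prodMk
        (hrestr.comp measurable_snd)).prodMk
        (((measurable_pi_apply _).comp measurable_snd).snd)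
    set gW : A × (Fin (n + 1) → Y × Z) → Y × (Fin n → Y × Z) :=
      fun q => ((q.2 (Fin.last n)).1, restr q.2) with hgWdef
    have hgW : Measurable gW :=
      (((measurable_pi_apply _).comp measurable_snd).fst).prodMk (hrestr.comp measurable_snd)
    have hmapBig : μ.map (fun ω => ((yq ω, prev ω), zq ω)) = ((μ.map α) ⊗ₘ κJ).map g := by
      rw [← hjoint, Measure.map_map hg hαyz]; rfl
    have hmapW : μ.map (fun ω => (yq ω, prev ω)) = ((μ.map α) ⊗ₘ κJ).map gW := by
      rw [← hjoint, Measure.map_map hgW hαyz]; rfl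
    refine MeasureTheory.ext_of_generate_finite _ generateFrom_prod.symm isPiSystem_prod ?_
      (by simp)
    rintro _ ⟨S, hS, T, hT, rfl⟩
    simp only [Set.mem_setOf_eq] at hS hT
    -- the "joint event" on one-step × history space
    have hrm : Measurable fun q : (Y × Z) × (Fin n → Y × Z) => ((q.1.1, q.2), q.1.2) :=
      ((measurable_fst.fst).prodMk measurable_snd).prodMk measurable_fst.snd
    set E : Set ((Y × Z) × (Fin n → Y × Z)) :=
      (fun q => ((q.1.1, q.2), q.1.2)) ⁻¹' (S ×ˢ T) with hEdef
    have hE : MeasurableSet E := hrm (hS.prod hT)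
    -- LHS reduction
    have hL1 : (μ.map fun ω => ((yq ω, prev ω), zq ω)) (S ×ˢ T)
        = ∫⁻ a, ((m1 a).prod (Measure.pi fun _ : Fin n => m1 a)) E ∂(μ.map α) := by
      rw [hmapBig, Measure.map_apply hg (hS.prod hT), Measure.compProd_apply (hg (hS.prod hT))]
      refine lintegral_congr fun a => ?_
      have h2 : Prod.mk a ⁻¹' (g ⁻¹' (S ×ˢ T)) = split ⁻¹' E := rfl
      rw [h2, (hsplitMP a).measure_preimage hE.nullMeasurableSet]
    have hL2 : ∀ a, ((m1 a).prod (Measure.pi fun _ : Fin n => m1 a)) E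
        = ∫⁻ y, ∫⁻ d, S.indicator 1 (y, d) * lik (a, y) T ∂κn a ∂νY := by
      intro a
      haveI := hm1 a
      have hFm : Measurable fun y => (Measure.pi fun _ : Fin n => m1 a) (Prod.mk y ⁻¹' S) :=
        measurable_measure_prodMk_left hS
      have hGm : Measurable fun q : Y × Z =>
          (Measure.pi fun _ : Fin n => m1 a) (Prod.mk q.1 ⁻¹' S) * T.indicator 1 q.2 :=
        (hFm.comp measurable_fst).mul ((measurable_one.indicator hT).comp measurable_snd)
      rw [Measure.prod_apply hE]
      have hsec : ∀ q : Y × Z, (Measure.pi fun _ : Fin n => m1 a) (Prod.mk q ⁻¹' E)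
          = (Measure.pi fun _ : Fin n => m1 a) (Prod.mk q.1 ⁻¹' S) * T.indicator 1 q.2 := by
        intro q
        by_cases hq : q.2 ∈ T
        · have h3 : Prod.mk q ⁻¹' E = Prod.mk q.1 ⁻¹' S := by
            ext d; simp [hEdef, hq]
          rw [h3, Set.indicator_of_mem hq, Pi.one_apply, mul_one]
        · have h3 : Prod.mk q ⁻¹' E = ∅ := by
            ext d; simp [hEdef, hq]
          rw [h3, Set.indicator_of_notMem hq, measure_empty, mul_zero]
      rw [lintegral_congr hsec]
      rw [show m1 a = νY ⊗ₘ (lik.comap (fun y => (a, y))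
        (measurable_const.prodMk measurable_id)) from rfl]
      rw [Measure.lintegral_compProd hGm]
      refine lintegral_congr fun y => ?_
      show (∫⁻ z, (Measure.pi fun _ : Fin n => m1 a) (Prod.mk y ⁻¹' S) * T.indicator 1 z
        ∂(lik.comap (fun y' => (a, y')) (measurable_const.prodMk measurable_id)) y) = _
      rw [lintegral_const_mul _ (measurable_one.indicator hT),
        lintegral_indicator_one hT, Kernel.comap_apply]
      rw [hκn a]
      have hind1 : Measurable (S.indicator (1 : Y × (Fin n → Y × Z) → ℝ≥0∞)) :=
        measurable_one.indicator hS
      have hms : Measurable fun d => S.indicator 1 (y, d) :=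
        hind1.comp (measurable_prodMk_left : Measurable fun d : Fin n → Y × Z => (y, d))
      rw [lintegral_mul_const _ hms]
      congr 1
      rw [← lintegral_indicator_one (measurable_prodMk_left hS)]
      exact lintegral_congr fun d => by by_cases h : (y, d) ∈ S <;> simp [h]
    have hLHS : (μ.map fun ω => ((yq ω, prev ω), zq ω)) (S ×ˢ T)
        = ∫⁻ a, ∫⁻ y, ∫⁻ d, S.indicator 1 (y, d) * lik (a, y) T ∂κn a ∂νY ∂(μ.map α) := by
      rw [hL1]; exact lintegral_congr fun a => hL2 a
    -- RHS reduction
    have hΦ : Measurable fun p : Y × (Fin n → Y × Z) => S.indicator 1 p * κmix p T :=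
      (measurable_one.indicator hS).mul (Kernel.measurable_coe κmix hT)
    have hR1 : ((μ.map fun ω => (yq ω, prev ω)) ⊗ₘ κmix) (S ×ˢ T)
        = ∫⁻ p, S.indicator 1 p * κmix p T ∂(μ.map fun ω => (yq ω, prev ω)) := by
      rw [Measure.compProd_apply (hS.prod hT)]
      refine lintegral_congr fun p => ?_
      by_cases hp : p ∈ S
      · have h3 : Prod.mk p ⁻¹' (S ×ˢ T) = T := by ext z; simp [hp]
        rw [h3, Set.indicator_of_mem hp, Pi.one_apply, one_mul]
      · have h3 : Prod.mk p ⁻¹' (S ×ˢ T) = ∅ := by ext z; simp [hp]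
        rw [h3, Set.indicator_of_notMem hp, measure_empty, zero_mul]
    have hr2m : Measurable fun q : (Y × Z) × (Fin n → Y × Z) =>
        S.indicator 1 (q.1.1, q.2) * κmix (q.1.1, q.2) T :=
      hΦ.comp (measurable_fst.fst.prodMk measurable_snd)
    have hR2 : ∀ a, (∫⁻ f, S.indicator 1 (gW (a, f)) * κmix (gW (a, f)) T ∂κJ a)
        = ∫⁻ y, ∫⁻ d, S.indicator 1 (y, d) * κmix (y, d) T ∂κn a ∂νY := by
      intro a
      haveI := hm1 a
      have hinner : Measurable fun q : Y × Z => ∫⁻ d, S.indicator 1 (q.1, d) * κmix (q.1, d) T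
          ∂(Measure.pi fun _ : Fin n => m1 a) := hr2m.lintegral_prod_right'
      calc (∫⁻ f, S.indicator 1 (gW (a, f)) * κmix (gW (a, f)) T ∂κJ a)
          = ∫⁻ q, S.indicator 1 (q.1.1, q.2) * κmix (q.1.1, q.2) T
              ∂((m1 a).prod (Measure.pi fun _ : Fin n => m1 a)) :=
            (hsplitMP a).lintegral_comp hr2m
        _ = ∫⁻ q, ∫⁻ d, S.indicator 1 (q.1, d) * κmix (q.1, d) T
              ∂(Measure.pi fun _ : Fin n => m1 a) ∂(m1 a) :=
            lintegral_prod _ hr2m.aemeasurable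
        _ = ∫⁻ y, ∫⁻ _z, (∫⁻ d, S.indicator 1 (y, d) * κmix (y, d) T
              ∂(Measure.pi fun _ : Fin n => m1 a))
              ∂((lik.comap (fun y' => (a, y')) (measurable_const.prodMk measurable_id)) y)
              ∂νY :=
            Measure.lintegral_compProd hinner
        _ = ∫⁻ y, ∫⁻ d, S.indicator 1 (y, d) * κmix (y, d) T
              ∂(Measure.pi fun _ : Fin n => m1 a) ∂νY := by
            refine lintegral_congr fun y => ?_
            simp
        _ = ∫⁻ y, ∫⁻ d, S.indicator 1 (y, d) * κmix (y, d) T ∂κn a ∂νY := by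
            simp_rw [← hκn a]
    have hRHS : ((μ.map fun ω => (yq ω, prev ω)) ⊗ₘ κmix) (S ×ˢ T)
        = ∫⁻ a, ∫⁻ y, ∫⁻ d, S.indicator 1 (y, d) * κmix (y, d) T ∂κn a ∂νY ∂(μ.map α) :=
      calc ((μ.map fun ω => (yq ω, prev ω)) ⊗ₘ κmix) (S ×ˢ T)
          = ∫⁻ p, S.indicator 1 p * κmix p T ∂(μ.map fun ω => (yq ω, prev ω)) := hR1
        _ = ∫⁻ p, S.indicator 1 p * κmix p T ∂(((μ.map α) ⊗ₘ κJ).map gW) := by rw [hmapW]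
        _ = ∫⁻ q, S.indicator 1 (gW q) * κmix (gW q) T ∂((μ.map α) ⊗ₘ κJ) :=
            lintegral_map hΦ hgW
        _ = ∫⁻ a, ∫⁻ f, S.indicator 1 (gW (a, f)) * κmix (gW (a, f)) T ∂κJ a ∂(μ.map α) :=
            Measure.lintegral_compProd (hΦ.comp hgW)
        _ = ∫⁻ a, ∫⁻ y, ∫⁻ d, S.indicator 1 (y, d) * κmix (y, d) T ∂κn a ∂νY ∂(μ.map α) :=
            lintegral_congr fun a => hR2 a
    -- Fubini swaps
    have hswapm1 : Measurable fun p : A × Y =>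
        ∫⁻ d, S.indicator 1 (p.2, d) * lik (p.1, p.2) T ∂κn p.1 := by
      have hf : Measurable fun q : (A × Y) × (Fin n → Y × Z) =>
          S.indicator 1 (q.1.2, q.2) * lik (q.1.1, q.1.2) T :=
        ((measurable_one.indicator hS).comp (measurable_fst.snd.prodMk measurable_snd)).mul
          ((Kernel.measurable_coe lik hT).comp
            (measurable_fst.fst.prodMk measurable_fst.snd))
      have h5 := hf.lintegral_kernel_prod_right'
        (κ := κn.comap (Prod.fst : A × Y → A) measurable_fst)
      simpa only [Kernel.comap_apply] using h5
    have hswapm2 : Measurable fun p : A × Y =>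
        ∫⁻ d, S.indicator 1 (p.2, d) * κmix (p.2, d) T ∂κn p.1 := by
      have hf : Measurable fun q : (A × Y) × (Fin n → Y × Z) =>
          S.indicator 1 (q.1.2, q.2) * κmix (q.1.2, q.2) T :=
        hΦ.comp ((measurable_fst.snd).prodMk measurable_snd)
      have h5 := hf.lintegral_kernel_prod_right'
        (κ := κn.comap (Prod.fst : A × Y → A) measurable_fst)
      simpa only [Kernel.comap_apply] using h5
    have hswapL := lintegral_lintegral_swap (μ := μ.map α) (ν := νY)
      (f := fun a y => ∫⁻ d, S.indicator 1 (y, d) * lik (a, y) T ∂κn a) hswapm1.aemeasurable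
    have hswapR := lintegral_lintegral_swap (μ := μ.map α) (ν := νY)
      (f := fun a y => ∫⁻ d, S.indicator 1 (y, d) * κmix (y, d) T ∂κn a) hswapm2.aemeasurable
    -- pointwise (in the condition y) identification via the posterior
    have hfinal : ∀ y : Y,
        (∫⁻ a, ∫⁻ d, S.indicator 1 (y, d) * lik (a, y) T ∂κn a ∂(μ.map α))
        = ∫⁻ a, ∫⁻ d, S.indicator 1 (y, d) * κmix (y, d) T ∂κn a ∂(μ.map α) := by
      intro y
      have hψ1 : Measurable fun q : (Fin n → Y × Z) × A =>
          S.indicator 1 (y, q.1) * lik (q.2, y) T :=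
        ((measurable_one.indicator hS).comp (measurable_const.prodMk measurable_fst)).mul
          ((Kernel.measurable_coe lik hT).comp (measurable_snd.prodMk measurable_const))
      have hψ2 : Measurable fun q : (Fin n → Y × Z) × A =>
          S.indicator 1 (y, q.1) * κmix (y, q.1) T :=
        ((measurable_one.indicator hS).comp (measurable_const.prodMk measurable_fst)).mul
          ((Kernel.measurable_coe κmix hT).comp (measurable_const.prodMk measurable_fst))
      have hFd : Measurable fun d => S.indicator 1 (y, d) * κmix (y, d) T :=
        hΦ.comp measurable_prodMk_left
      have hm : Measurable fun a : A => lik (a, y) T :=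
        (Kernel.measurable_coe lik hT).comp measurable_prodMk_right
      calc (∫⁻ a, ∫⁻ d, S.indicator 1 (y, d) * lik (a, y) T ∂κn a ∂(μ.map α))
          = ∫⁻ ω, S.indicator 1 (y, prev ω) * lik (α ω, y) T ∂μ := hred _ hψ1
        _ = ∫⁻ q, S.indicator 1 (y, q.1) * lik (q.2, y) T
              ∂(μ.map fun ω => (prev ω, α ω)) := (lintegral_map hψ1 hpostm).symm
        _ = ∫⁻ q, S.indicator 1 (y, q.1) * lik (q.2, y) T ∂((μ.map prev) ⊗ₘ post) := by
            rw [hpost]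
        _ = ∫⁻ d, ∫⁻ a, S.indicator 1 (y, d) * lik (a, y) T ∂post d ∂(μ.map prev) :=
            Measure.lintegral_compProd hψ1
        _ = ∫⁻ d, S.indicator 1 (y, d) * κmix (y, d) T ∂(μ.map prev) := by
            refine lintegral_congr fun d => ?_
            have hbind : κmix (y, d) T = ∫⁻ a, lik (a, y) T ∂post d := by
              rw [hκmixapply (y, d)]
              exact Measure.bind_apply hT ((Kernel.measurable lik).comp
                measurable_prodMk_right).aemeasurable
            rw [lintegral_const_mul _ hm, hbind]
        _ = ∫⁻ ω, S.indicator 1 (y, prev ω) * κmix (y, prev ω) T ∂μ :=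
            lintegral_map hFd hprev
        _ = ∫⁻ a, ∫⁻ d, S.indicator 1 (y, d) * κmix (y, d) T ∂κn a ∂(μ.map α) :=
            (hred _ hψ2).symm
    calc (μ.map fun ω => ((yq ω, prev ω), zq ω)) (S ×ˢ T)
        = ∫⁻ a, ∫⁻ y, ∫⁻ d, S.indicator 1 (y, d) * lik (a, y) T ∂κn a ∂νY ∂(μ.map α) := hLHS
      _ = ∫⁻ y, ∫⁻ a, ∫⁻ d, S.indicator 1 (y, d) * lik (a, y) T ∂κn a ∂(μ.map α) ∂νY :=
          hswapL
      _ = ∫⁻ y, ∫⁻ a, ∫⁻ d, S.indicator 1 (y, d) * κmix (y, d) T ∂κn a ∂(μ.map α) ∂νY :=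
          lintegral_congr hfinal
      _ = ∫⁻ a, ∫⁻ y, ∫⁻ d, S.indicator 1 (y, d) * κmix (y, d) T ∂κn a ∂νY ∂(μ.map α) :=
          hswapR.symm
      _ = ((μ.map fun ω => (yq ω, prev ω)) ⊗ₘ κmix) (S ×ˢ T) := hRHS.symm
  have hae := condDistrib_ae_eq_of_measure_eq_compProd (μ := μ) (fun ω => (yq ω, prev ω)) hzq.aemeasurable key
  filter_upwards [hae] with p hp
  rw [hp]
  exact hκmixapply p
end
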